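/- Let A be an n × n symmetric integer matrix with walk matrix W = [e, Ae, …, A^{n−1}e], λ₀ an integer, z₀ an integer vector, p a prime, τ ≥ 1, j ≥ 0. Assume Wᵀ z₀ ≡ 0 (mod p^τ). If an integer vector y satisfies (A − λ₀ I) y ≡ s p^j z₀ (mod p^{j+τ}) for some integer s, then Wᵀ y ≡ (eᵀ y) · (1, λ₀, λ₀², …, λ₀^{n−1})ᵀ (mod p^{j+τ}). -/

import Mathlib

open Matrix

/-- The walk matrix `[e, Ae, …, A^{n-1}e]` of a square matrix `A`. -/
noncomputable def walkMatrix {n : ℕ} {R : Type*} [CommRing R]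
    (A : Matrix (Fin n) (Fin n) R) : Matrix (Fin n) (Fin n) R :=
  Matrix.of fun i j => ((A ^ (j : ℕ)) *ᵥ (fun _ => 1)) i

/-- If `Wᵀ z₀ ≡ 0 (mod p^τ)` and `(A - λ₀ I) y ≡ s p^j z₀ (mod p^{j+τ})`, then
`Wᵀ y ≡ (eᵀ y) (1, λ₀, …, λ₀^{n-1})ᵀ (mod p^{j+τ})`. -/
theorem walkMatrix_congruence_of_near_eigenvector
    {n : ℕ} (p : ℕ) (hp : p.Prime) (τ j : ℕ) (hτ : 1 ≤ τ)
    (A : Matrix (Fin n) (Fin n) ℤ) (hsymm : Aᵀ = A)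
    (W : Matrix (Fin n) (Fin n) ℤ) (hW : W = walkMatrix A)
    (lam s : ℤ) (z₀ y : Fin n → ℤ)
    (hWz₀ : ∀ i, (p : ℤ) ^ τ ∣ (Wᵀ *ᵥ z₀) i)
    (hy : ∀ i, (p : ℤ) ^ (j + τ) ∣ (((A - lam • (1 : Matrix (Fin n) (Fin n) ℤ)) *ᵥ y - (s * (p : ℤ) ^ j) • z₀)) i) :
    ∀ r : Fin n, (p : ℤ) ^ (j + τ) ∣ (Wᵀ *ᵥ y) r - (∑ i, y i) * lam ^ (r : ℕ) := by
  subst hW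
  set e : Fin n → ℤ := fun _ => 1 with he
  have hsym : ∀ u v : Fin n → ℤ, (A *ᵥ u) ⬝ᵥ v = u ⬝ᵥ (A *ᵥ v) := by
    intro u v
    rw [dotProduct_comm, dotProduct_mulVec, ← mulVec_transpose, hsymm, dotProduct_comm]
  set d : Fin n → ℤ := (A - lam • 1) *ᵥ y - (s * (p:ℤ)^j) • z₀ with hd
  have hAy : A *ᵥ y = lam • y + (s * (p:ℤ)^j) • z₀ + d := by
    simp only [hd, sub_mulVec, smul_mulVec, one_mulVec]
    funext i; simp
  have hWcol : ∀ (v : Fin n → ℤ) (r : Fin n),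
      ((walkMatrix A)ᵀ *ᵥ v) r = (A ^ (r:ℕ) *ᵥ e) ⬝ᵥ v := by
    intro v r
    simp [walkMatrix, mulVec, dotProduct, he]
  have key : ∀ k : ℕ, k < n → (p:ℤ)^(j+τ) ∣ ((A^k *ᵥ e) ⬝ᵥ y) - lam^k * (∑ i, y i) := by
    intro k
    induction k with
    | zero => intro _; simp [dotProduct, he]
    | succ k ih =>
      intro hk
      have hk' : k < n := Nat.lt_of_succ_lt hk
      have ih' := ih hk'
      have step : (A^(k+1) *ᵥ e) ⬝ᵥ y = (A^k *ᵥ e) ⬝ᵥ (A *ᵥ y) := by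
        rw [pow_succ', ← mulVec_mulVec, hsym]
      have hz : (p:ℤ)^τ ∣ (A^k *ᵥ e) ⬝ᵥ z₀ := by
        have := hWz₀ ⟨k, hk'⟩
        rwa [hWcol z₀ ⟨k, hk'⟩] at this
      have hdd : (p:ℤ)^(j+τ) ∣ (A^k *ᵥ e) ⬝ᵥ d := by
        apply Finset.dvd_sum
        intro i _
        exact Dvd.dvd.mul_left (hy i) _
      rw [step, hAy]
      have expand : (A^k *ᵥ e) ⬝ᵥ (lam • y + (s * (p:ℤ)^j) • z₀ + d)
          = lam * ((A^k *ᵥ e) ⬝ᵥ y) + (s * (p:ℤ)^j) * ((A^k *ᵥ e) ⬝ᵥ z₀) + (A^k *ᵥ e) ⬝ᵥ d := by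
        simp only [dotProduct_add, dotProduct_smul, smul_eq_mul]
      rw [expand]
      have h1 : (p:ℤ)^(j+τ) ∣ lam * (((A^k *ᵥ e) ⬝ᵥ y) - lam^k * (∑ i, y i)) :=
        Dvd.dvd.mul_left ih' _
      have h2 : (p:ℤ)^(j+τ) ∣ (s * (p:ℤ)^j) * ((A^k *ᵥ e) ⬝ᵥ z₀) := by
        obtain ⟨c, hc⟩ := hz
        refine ⟨s * c, ?_⟩
        rw [hc, pow_add]; ring
      have := dvd_add (dvd_add h1 h2) hdd
      convert this using 1
      · rfl
      ring
  intro r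
  rw [hWcol y r]
  have := key (r:ℕ) r.isLt
  convert this using 1
  ring
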